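/- Let H be a transitive permutation group on a finite set B of size d, and let G = C₂ ≀ H act on {1,2} × B. If G' ≤ G is a subgroup that contains at least one transposition of {1,2} × B and whose image under the projection G → H is all of H, then G' = G. -/

import Mathlib

private lemma zmod2_add_self (a : ZMod 2) : a + a = 0 := by
  fin_cases a <;> decide

/-- The element `x ⋊ s` of the wreath product `C₂ ≀ H`, realized as a permutation of
`ZMod 2 × B` (the set `{1,2} × B`): blocks are permuted by `s` and then the two points of the
block over `b` are swapped iff the coordinate `x b` is nonzero. -/
def wreathPerm {B : Type} (x : B → ZMod 2) (s : Equiv.Perm B) : Equiv.Perm (ZMod 2 × B) where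
  toFun p := (p.1 + x (s p.2), s p.2)
  invFun p := (p.1 + x p.2, s.symm p.2)
  left_inv p := by
    obtain ⟨i, b⟩ := p
    simp [add_assoc, zmod2_add_self]
  right_inv p := by
    obtain ⟨i, b⟩ := p
    simp [add_assoc, zmod2_add_self]

lemma wreathPerm_apply {B : Type} (x : B → ZMod 2) (s : Equiv.Perm B) (p : ZMod 2 × B) :
    wreathPerm x s p = (p.1 + x (s p.2), s p.2) := rfl

lemma wreathPerm_one {B : Type} : wreathPerm (fun _ : B => (0 : ZMod 2)) 1 = 1 := by
  apply Equiv.ext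
  intro p
  simp [wreathPerm_apply]

lemma wreathPerm_mul {B : Type} (x y : B → ZMod 2) (s t : Equiv.Perm B) :
    wreathPerm x s * wreathPerm y t
      = wreathPerm (fun c => x c + y (s⁻¹ c)) (s * t) := by
  apply Equiv.ext
  intro p
  simp [wreathPerm_apply, Equiv.Perm.mul_apply]
  ring

lemma wreathPerm_inv {B : Type} (x : B → ZMod 2) (s : Equiv.Perm B) :
    (wreathPerm x s)⁻¹ = wreathPerm (fun c => x (s c)) s⁻¹ := by
  apply inv_eq_of_mul_eq_one_right
  rw [wreathPerm_mul]
  have h1 : (fun c => x c + x (s (s⁻¹ c))) = fun _ : B => (0 : ZMod 2) := by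
    funext c
    simp [zmod2_add_self]
  rw [h1]
  rw [mul_inv_cancel]
  exact wreathPerm_one


private lemma zmod2_add_one {a : ZMod 2} (h : a + 1 = 1) : a = 0 := by
  revert a
  decide

private lemma zmod2_ne_zero {a : ZMod 2} (h : a ≠ 0) : a = 1 := by
  revert a
  decide

private lemma perm_apply_inv_self {α : Type*} (f : Equiv.Perm α) (x : α) : f (f⁻¹ x) = x :=
  f.apply_symm_apply x

private lemma perm_inv_apply_self {α : Type*} (f : Equiv.Perm α) (x : α) : f⁻¹ (f x) = x :=
  f.symm_apply_apply x

private lemma three_in_pair {α : Type*} {u v w p q : α}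
    (h1 : u = p ∨ u = q) (h2 : v = p ∨ v = q) (h3 : w = p ∨ w = q)
    (huv : u ≠ v) (huw : u ≠ w) (hvw : v ≠ w) : False := by
  rcases h1 with h1 | h1 <;> rcases h2 with h2 | h2 <;> rcases h3 with h3 | h3 <;> simp_all

private def delta {B : Type} [DecidableEq B] (b₀ : B) : B → ZMod 2 :=
  fun b => if b = b₀ then 1 else 0

/-- A swap in the wreath product must be a base swap δ over a single block. -/
private lemma swap_analysis {B : Type} [DecidableEq B] {x : B → ZMod 2} {s : Equiv.Perm B}
    (h : Equiv.Perm.IsSwap (wreathPerm x s)) :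
    ∃ b₀ : B, s = 1 ∧ x = delta b₀ := by
  obtain ⟨p, q, hpq, hg⟩ := h
  have hmoved : ∀ r : ZMod 2 × B, wreathPerm x s r ≠ r → r = p ∨ r = q := by
    intro r hr
    by_contra hc
    push_neg at hc
    exact hr (by rw [hg, Equiv.swap_apply_of_ne_of_ne hc.1 hc.2])
  have hs1 : s = 1 := by
    apply Equiv.ext
    intro b
    simp only [Equiv.Perm.one_apply]
    by_contra hb
    have hc : s⁻¹ b ≠ b := fun h => hb (by conv_lhs => rw [← h]; rw [perm_apply_inv_self])
    have m1 : ((0 : ZMod 2), b) = p ∨ ((0 : ZMod 2), b) = q := by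
      apply hmoved; rw [wreathPerm_apply]
      exact fun h => hb (congrArg Prod.snd h)
    have m2 : ((1 : ZMod 2), b) = p ∨ ((1 : ZMod 2), b) = q := by
      apply hmoved; rw [wreathPerm_apply]
      exact fun h => hb (congrArg Prod.snd h)
    have m3 : ((0 : ZMod 2), s⁻¹ b) = p ∨ ((0 : ZMod 2), s⁻¹ b) = q := by
      apply hmoved; rw [wreathPerm_apply]
      intro h
      have h2 := congrArg Prod.snd h
      simp only [perm_apply_inv_self] at h2
      exact hc h2.symm
    have d12 : ((0 : ZMod 2), b) ≠ ((1 : ZMod 2), b) := fun h => by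
      have h1 : (0 : ZMod 2) = 1 := congrArg Prod.fst h
      exact absurd h1 (by decide)
    have d13 : ((0 : ZMod 2), b) ≠ ((0 : ZMod 2), s⁻¹ b) := fun h =>
      hc (congrArg Prod.snd h).symm
    have d23 : ((1 : ZMod 2), b) ≠ ((0 : ZMod 2), s⁻¹ b) := fun h =>
      hc (congrArg Prod.snd h).symm
    exact three_in_pair m1 m2 m3 d12 d13 d23
  subst hs1
  have happ : ∀ r : ZMod 2 × B, wreathPerm x 1 r = (r.1 + x r.2, r.2) := by
    intro r; rw [wreathPerm_apply]; rfl
  have hp : x p.2 ≠ 0 := by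
    intro h0
    have h1 : wreathPerm x 1 p = p := by rw [happ, h0]; simp
    rw [hg] at h1
    simp [Equiv.swap_apply_left] at h1
    exact hpq h1.symm
  refine ⟨p.2, rfl, ?_⟩
  funext b
  by_cases hb : b = p.2
  · subst hb; simp [delta, zmod2_ne_zero hp]
  · simp only [delta, if_neg hb]
    by_contra hxb
    have m1 : ((0 : ZMod 2), b) = p ∨ ((0 : ZMod 2), b) = q := by
      apply hmoved; rw [happ]
      intro h
      exact hxb (by simpa using congrArg Prod.fst h)
    have m2 : ((1 : ZMod 2), b) = p ∨ ((1 : ZMod 2), b) = q := by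
      apply hmoved; rw [happ]
      intro h
      have h1 := congrArg Prod.fst h
      simp only at h1
      rw [add_comm] at h1
      exact hxb (zmod2_add_one h1)
    have m3 : ((0 : ZMod 2), p.2) = p ∨ ((0 : ZMod 2), p.2) = q := by
      apply hmoved; rw [happ]
      intro h
      exact hp (by simpa using congrArg Prod.fst h)
    have d12 : ((0 : ZMod 2), b) ≠ ((1 : ZMod 2), b) := fun h => by
      have h1 : (0 : ZMod 2) = 1 := congrArg Prod.fst h
      exact absurd h1 (by decide)
    have d13 : ((0 : ZMod 2), b) ≠ ((0 : ZMod 2), p.2) := fun h =>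
      hb (congrArg Prod.snd h)
    have d23 : ((1 : ZMod 2), b) ≠ ((0 : ZMod 2), p.2) := fun h =>
      hb (congrArg Prod.snd h)
    exact three_in_pair m1 m2 m3 d12 d13 d23

/-- If `G' ≤ G = C₂ ≀ H` contains a transposition and surjects onto the transitive group `H`,
then `G' = G`. -/
theorem subgroup_of_wreath_with_transposition_and_full_projection_eq
    {B : Type} [Fintype B] [DecidableEq B]
    (H : Subgroup (Equiv.Perm B))
    (htrans : ∀ a b : B, ∃ s ∈ H, s a = b)
    (G' : Subgroup (Equiv.Perm (ZMod 2 × B)))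
    (hsub : ∀ g ∈ G', ∃ (x : B → ZMod 2) (s : Equiv.Perm B), s ∈ H ∧ g = wreathPerm x s)
    (hswap : ∃ g ∈ G', Equiv.Perm.IsSwap g)
    (hproj : ∀ s ∈ H, ∃ x : B → ZMod 2, wreathPerm x s ∈ G') :
    ∀ (x : B → ZMod 2) (s : Equiv.Perm B), s ∈ H → wreathPerm x s ∈ G' := by
  classical
  obtain ⟨g, hg, hgswap⟩ := hswap
  obtain ⟨x₀, s₀, hs₀H, rfl⟩ := hsub g hg
  obtain ⟨b₀, rfl, rfl⟩ := swap_analysis hgswap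
  have hdelta : ∀ b : B, wreathPerm (delta b) 1 ∈ G' := by
    intro b
    obtain ⟨s, hsH, hsb⟩ := htrans b₀ b
    obtain ⟨y, hy⟩ := hproj s hsH
    have hconj : wreathPerm y s * wreathPerm (delta b₀) 1 * (wreathPerm y s)⁻¹
        = wreathPerm (delta b) 1 := by
      rw [wreathPerm_inv, wreathPerm_mul, wreathPerm_mul, mul_one, mul_inv_cancel]
      congr 1
      funext c
      simp only [perm_apply_inv_self]
      have h2 : y c + delta b₀ (s⁻¹ c) + y c = delta b₀ (s⁻¹ c) := by
        rw [add_comm (y c), add_assoc, zmod2_add_self, add_zero]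
      rw [h2]
      simp only [delta]
      by_cases hcb : c = b
      · rw [if_pos hcb, if_pos]
        rw [hcb, ← hsb, perm_inv_apply_self]
      · rw [if_neg hcb, if_neg]
        intro h
        apply hcb
        rw [← hsb, ← h, perm_apply_inv_self]
    rw [← hconj]
    exact G'.mul_mem (G'.mul_mem hy hg) (G'.inv_mem hy)
  have hbase : ∀ (F : Finset B) (z : B → ZMod 2), (∀ b, z b ≠ 0 → b ∈ F) →
      wreathPerm z 1 ∈ G' := by
    intro F
    induction F using Finset.induction with
    | empty =>
      intro z hz
      have hz0 : z = fun _ => 0 := by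
        funext b
        by_contra hb
        exact absurd (hz b hb) (Finset.notMem_empty b)
      rw [hz0, wreathPerm_one]
      exact G'.one_mem
    | @insert a F ha ih =>
      intro z hz
      by_cases hza : z a = 0
      · apply ih
        intro b hb
        rcases Finset.mem_insert.mp (hz b hb) with h | h
        · subst h; exact absurd hza hb
        · exact h
      · have hrest : wreathPerm (fun c => delta a c + z c) 1 ∈ G' := by
          apply ih
          intro b hb
          by_cases hba : b = a
          · exfalso
            subst hba
            simp only [delta, if_pos rfl] at hb
            rw [zmod2_ne_zero hza] at hb
            exact hb (by decide)
          · simp only [delta, if_neg hba, zero_add] at hb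
            rcases Finset.mem_insert.mp (hz b hb) with h | h
            · exact absurd h hba
            · exact h
        have hmul : wreathPerm (delta a) 1 * wreathPerm (fun c => delta a c + z c) 1
            = wreathPerm z 1 := by
          rw [wreathPerm_mul, one_mul]
          congr 1
          funext c
          simp only [inv_one, Equiv.Perm.one_apply]
          rw [← add_assoc, zmod2_add_self, zero_add]
        rw [← hmul]
        exact G'.mul_mem (hdelta a) hrest
  intro x s hsH
  obtain ⟨y, hy⟩ := hproj s hsH
  have hxy : wreathPerm (fun c => x c + y c) 1 ∈ G' := hbase Finset.univ _
    (fun b _ => Finset.mem_univ b)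
  have hmul : wreathPerm (fun c => x c + y c) 1 * wreathPerm y s = wreathPerm x s := by
    rw [wreathPerm_mul, one_mul]
    congr 1
    funext c
    simp only [inv_one, Equiv.Perm.one_apply]
    rw [add_assoc, zmod2_add_self, add_zero]
  rw [← hmul]
  exact G'.mul_mem hxy hy
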